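/- Fix b, c > 0 and d ≥ 0. Let (D_n)_{n ≥ 2} be a bounded real sequence with L D = δ^{(2)}. Then the sequence u^λ := −(d/(2bc)) e^{(−1)} + (d(c+d)/(2bc)) D + (1/(2c)) e^{(1)} is bounded and satisfies (L u^λ)_n = 1/n − 1/(n+1) for every n ≥ 2, i.e., L u^λ = e^{(0)} − e^{(1)}. -/

import Mathlib

noncomputable def Lop (b c d : ℝ) (w : ℕ → ℝ) (n : ℕ) : ℝ :=
  -b * (((n : ℝ) + 2) / ((n : ℝ) + 1)) * w (n + 1)
    + (b + c * ((n : ℝ) - 1) + d) * w n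
    - ((n : ℝ) - 2) * (c + d / ((n : ℝ) - 1)) * w (n - 1)

theorem stmt_5 (b c d : ℝ) (hb : 0 < b) (hc : 0 < c) (hd : 0 ≤ d)
    (D : ℕ → ℝ) (hDbdd : ∃ C : ℝ, ∀ n : ℕ, 2 ≤ n → |D n| ≤ C)
    (hLD : ∀ n : ℕ, 2 ≤ n → Lop b c d D n = if n = 2 then 1 else 0) :
    (∃ C : ℝ, ∀ n : ℕ, 2 ≤ n →
      |(-(d / (2 * b * c))) * (1 / ((n : ℝ) - 1))
        + (d * (c + d) / (2 * b * c)) * D n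
        + (1 / (2 * c)) * (1 / ((n : ℝ) + 1))| ≤ C) ∧
    ∀ n : ℕ, 2 ≤ n →
      Lop b c d
        (fun m : ℕ => (-(d / (2 * b * c))) * (1 / ((m : ℝ) - 1))
          + (d * (c + d) / (2 * b * c)) * D m
          + (1 / (2 * c)) * (1 / ((m : ℝ) + 1))) n
        = 1 / (n : ℝ) - 1 / ((n : ℝ) + 1) := by
  obtain ⟨C0, hC0⟩ := hDbdd
  have hC0' : 0 ≤ C0 := le_trans (abs_nonneg _) (hC0 2 le_rfl)
  constructor
  · refine ⟨d / (2 * b * c) + |d * (c + d) / (2 * b * c)| * C0 + 1 / (2 * c), ?_⟩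
    intro n hn
    have h1 : (1 : ℝ) ≤ (n : ℝ) - 1 := by
      have : (2 : ℝ) ≤ (n : ℝ) := by exact_mod_cast hn
      linarith
    have h2 : (1 : ℝ) ≤ (n : ℝ) + 1 := by linarith
    have hpos : 0 ≤ d / (2 * b * c) := by positivity
    calc |(-(d / (2 * b * c))) * (1 / ((n : ℝ) - 1))
        + (d * (c + d) / (2 * b * c)) * D n
        + (1 / (2 * c)) * (1 / ((n : ℝ) + 1))|
        ≤ |(-(d / (2 * b * c))) * (1 / ((n : ℝ) - 1))|
          + |(d * (c + d) / (2 * b * c)) * D n|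
          + |(1 / (2 * c)) * (1 / ((n : ℝ) + 1))| := by
            exact (abs_add_le _ _).trans (by gcongr; exact abs_add_le _ _)
      _ ≤ d / (2 * b * c) + |d * (c + d) / (2 * b * c)| * C0 + 1 / (2 * c) := by
          gcongr ?_ + ?_ + ?_
          · rw [abs_mul, abs_neg, abs_of_nonneg hpos]
            have : |1 / ((n : ℝ) - 1)| ≤ 1 := by
              rw [abs_of_nonneg (by positivity)]
              rw [div_le_one (by linarith)]; linarith
            calc d / (2 * b * c) * |1 / ((n : ℝ) - 1)| ≤ d / (2 * b * c) * 1 := by gcongr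
              _ = d / (2 * b * c) := mul_one _
          · rw [abs_mul]; gcongr; exact hC0 n hn
          · rw [abs_mul, abs_of_nonneg (by positivity : (0:ℝ) ≤ 1 / (2*c))]
            have : |1 / ((n : ℝ) + 1)| ≤ 1 := by
              rw [abs_of_nonneg (by positivity)]
              rw [div_le_one (by linarith)]; linarith
            calc (1 / (2 * c)) * |1 / ((n : ℝ) + 1)| ≤ (1 / (2 * c)) * 1 := by gcongr
              _ = 1 / (2 * c) := mul_one _
  · intro n hn
    have hb' : b ≠ 0 := ne_of_gt hb
    have hc' : c ≠ 0 := ne_of_gt hc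
    have hsplit : Lop b c d
        (fun m : ℕ => (-(d / (2 * b * c))) * (1 / ((m : ℝ) - 1))
          + (d * (c + d) / (2 * b * c)) * D m
          + (1 / (2 * c)) * (1 / ((m : ℝ) + 1))) n
        = Lop b c d (fun m : ℕ => (-(d / (2 * b * c))) * (1 / ((m : ℝ) - 1))
          + (1 / (2 * c)) * (1 / ((m : ℝ) + 1))) n
          + (d * (c + d) / (2 * b * c)) * Lop b c d D n := by
      simp only [Lop]; ring
    rw [hsplit, hLD n hn]
    obtain ⟨m, rfl⟩ : ∃ m, n = m + 2 := ⟨n - 2, by omega⟩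
    rcases Nat.eq_zero_or_pos m with rfl | hm
    · norm_num [Lop]
      field_simp
      ring
    · obtain ⟨k, rfl⟩ : ∃ k, m = k + 1 := ⟨m - 1, by omega⟩
      have hne : k + 1 + 2 ≠ 2 := by omega
      simp only [Lop, hne, if_false, mul_zero, add_zero]
      have e1 : k + 1 + 2 - 1 = k + 2 := by omega
      have e2 : k + 2 - 1 = k + 1 := by omega
      rw [e1]
      push_cast
      rw [show ((k:ℝ)+2-1) = (k:ℝ)+1 from by ring, show ((k:ℝ)+1+2-1) = (k:ℝ)+2 from by ring]
      have h1 : ((k : ℝ) + 1) ≠ 0 := by positivity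
      have h2 : ((k : ℝ) + 2) ≠ 0 := by positivity
      have h3 : ((k : ℝ) + 3) ≠ 0 := by positivity
      have h4 : ((k : ℝ) + 4) ≠ 0 := by positivity
      have h5 : ((k : ℝ) + 1 + 2 + 1 - 1) ≠ 0 := by ring_nf; positivity
      field_simp
      ring
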